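/- Fix a finite set Y ⊂ ℝ^d, f : Y → {-1,1}, t ∈ ℕ, and w > 0. The degree-t non-constant margin weight satisfies w*(f,t) ≥ w if and only if there exists a probability distribution μ on Y such that Σ_{y∈Y} μ(y) f(y) = 0 and |Σ_{y∈Y} μ(y) f(y) χ_S(y)| ≤ 1/w for every nonempty S ⊆ [d] with |S| ≤ t. -/

import Mathlib

open Classical in
/-- Degree of a multilinear polynomial given by its coefficient vector. -/
noncomputable def polyDegree {ι : Type*} [Fintype ι] (c : Finset ι → ℝ) : ℕ :=
  Finset.sup (Finset.univ.filter fun S => c S ≠ 0) Finset.card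

/-- Evaluation of a multilinear polynomial given by its coefficient vector. -/
noncomputable def evalPoly {ι : Type*} [Fintype ι] (c : Finset ι → ℝ) (x : ι → ℝ) : ℝ :=
  ∑ S : Finset ι, c S * ∏ i ∈ S, x i

/-- Weight (L1-norm of the coefficient vector) of a multilinear polynomial. -/
noncomputable def weight {ι : Type*} [Fintype ι] (c : Finset ι → ℝ) : ℝ :=
  ∑ S : Finset ι, |c S|

open Classical in
/-- The OR function on `{-1,1}^d`, with `-1` = TRUE. -/
noncomputable def ORd {d : ℕ} (x : Fin d → ℝ) : ℝ :=
  if ∃ i, x i = -1 then -1 else 1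

/-- The Boolean cube `{-1,1}^d` inside `ℝ^d`. -/
def cube (d : ℕ) : Set (Fin d → ℝ) := {x | ∀ i, x i = 1 ∨ x i = -1}

open Classical in
/-- Hamming weight: number of coordinates equal to `-1`. -/
noncomputable def hamming {d : ℕ} (x : Fin d → ℝ) : ℕ :=
  (Finset.univ.filter fun i => x i = -1).card

theorem stmt_9 (d t : ℕ) (w : ℝ) (hw : 0 < w)
    (Y : Finset (Fin d → ℝ)) (f : (Fin d → ℝ) → ℝ)
    (hf : ∀ y ∈ Y, f y = 1 ∨ f y = -1) :
    (∀ c : Finset (Fin d) → ℝ, polyDegree c ≤ t →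
        (∀ y ∈ Y, 1 ≤ f y * evalPoly c y) →
        w ≤ ∑ S ∈ Finset.univ.filter (fun S : Finset (Fin d) => S ≠ ∅), |c S|) ↔
    ∃ μ : (Fin d → ℝ) → ℝ,
      (∀ y ∈ Y, 0 ≤ μ y) ∧ (∑ y ∈ Y, μ y) = 1 ∧
      (∑ y ∈ Y, μ y * f y) = 0 ∧
      ∀ S : Finset (Fin d), S ≠ ∅ → S.card ≤ t →
        |∑ y ∈ Y, μ y * f y * ∏ i ∈ S, y i| ≤ 1 / w := by
  constructor
  · intro h
    classical
    by_contra hμ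
    push_neg at hμ
    -- Y nonempty (else contradiction with h applied to c = 0)
    rcases Y.eq_empty_or_nonempty with rfl | hY
    · have h0 := h 0 (by simp [polyDegree]) (by simp)
      simp at h0
      linarith
    -- the index type for the dual constraints
    set σ := {S : Finset (Fin d) // S ≠ ∅ ∧ S.card ≤ t} with hσdef
    -- the map sending y to its "constraint column"
    set T : (Fin d → ℝ) → ℝ × (σ → ℝ) :=
      fun y => (f y, fun S => w * (f y * ∏ i ∈ (S : Finset (Fin d)), y i)) with hT
    set L : ((↥Y) → ℝ) →ₗ[ℝ] ℝ × (σ → ℝ) :=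
      { toFun := fun ν => ∑ i : ↥Y, ν i • T i
        map_add' := fun a b => by
          simp only [Pi.add_apply, add_smul, Finset.sum_add_distrib]
        map_smul' := fun r a => by
          simp [Finset.smul_sum, mul_smul] } with hL
    set K : Set (ℝ × (σ → ℝ)) := L '' stdSimplex ℝ ↥Y with hK
    set C : Set (ℝ × (σ → ℝ)) :=
      {(0 : ℝ)} ×ˢ (Set.univ.pi fun _ : σ => Set.Icc (-1 : ℝ) 1) with hC
    have hKconv : Convex ℝ K := (convex_stdSimplex ℝ ↥Y).linear_image L
    have hKcomp : IsCompact K :=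
      (isCompact_stdSimplex ℝ ↥Y).image L.continuous_of_finiteDimensional
    have hCconv : Convex ℝ C :=
      (convex_singleton _).prod (convex_pi fun _ _ => convex_Icc _ _)
    have hCclosed : IsClosed C :=
      isClosed_singleton.prod (isClosed_set_pi fun _ _ => isClosed_Icc)
    -- disjointness from the nonexistence of μ
    have hdisj : Disjoint K C := by
      rw [Set.disjoint_left]
      rintro x ⟨ν, hν, rfl⟩ hxC
      obtain ⟨hx1, hx2⟩ := hxC
      simp only [Set.mem_singleton_iff] at hx1
      set μ : (Fin d → ℝ) → ℝ := fun y => if hy : y ∈ Y then ν ⟨y, hy⟩ else 0 with hμdef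
      have hμy : ∀ i : ↥Y, μ ↑i = ν i := fun i => dif_pos i.2
      have hfst : (L ν).1 = ∑ i : ↥Y, ν i * f ↑i := by
        simp [hL, hT, Prod.fst_sum]
      have hsnd : ∀ S : σ, (L ν).2 S
          = w * ∑ i : ↥Y, ν i * f ↑i * ∏ j ∈ (S : Finset (Fin d)), (i : Fin d → ℝ) j := by
        intro S
        simp only [hL, LinearMap.coe_mk, AddHom.coe_mk]
        rw [Prod.snd_sum, Finset.sum_apply, Finset.mul_sum]
        exact Finset.sum_congr rfl fun i _ => by simp [hT]; ring
      have hsum : ∀ g : (Fin d → ℝ) → ℝ, ∑ y ∈ Y, μ y * g y = ∑ i : ↥Y, ν i * g ↑i := by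
        intro g
        rw [← Finset.sum_attach Y (fun y => μ y * g y), Finset.univ_eq_attach]
        exact Finset.sum_congr rfl fun i _ => by rw [hμy]
      have key1 : ∀ y ∈ Y, 0 ≤ μ y := fun y hy => by
        simp only [hμdef, dif_pos hy]; exact hν.1 ⟨y, hy⟩
      have key2 : ∑ y ∈ Y, μ y = 1 := by
        have h2 := hν.2
        rw [Finset.univ_eq_attach] at h2
        rw [← Finset.sum_attach Y μ, ← h2]
        exact Finset.sum_congr rfl fun i _ => hμy i
      have key3 : ∑ y ∈ Y, μ y * f y = 0 := by rw [hsum f, ← hfst, hx1]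
      obtain ⟨S, hS1, hS2, hS3⟩ := hμ μ key1 key2 key3
      have hS1 : S ≠ ∅ := hS1.ne_empty
      refine absurd hS3 (not_lt.2 ?_)
      have hmem := hx2 ⟨S, hS1, hS2⟩ (Set.mem_univ _)
      have habs : |(L ν).2 ⟨S, hS1, hS2⟩| ≤ 1 := abs_le.2 ⟨hmem.1, hmem.2⟩
      rw [hsnd ⟨S, hS1, hS2⟩, abs_mul, abs_of_pos hw] at habs
      have h2 : ∑ y ∈ Y, μ y * f y * ∏ i ∈ S, y i
          = ∑ i : ↥Y, ν i * f ↑i * ∏ j ∈ S, (i : Fin d → ℝ) j := by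
        have := hsum (fun y => f y * ∏ i ∈ S, y i)
        simpa [mul_assoc] using this
      rw [h2, le_div_iff₀ hw]
      linarith [habs]
    -- separation
    obtain ⟨φ, u, v, hKu, huv, hCv⟩ :=
      geometric_hahn_banach_compact_closed hKconv hKcomp hCconv hCclosed hdisj
    set c₀ : ℝ := φ (1, 0) with hc₀
    set dS : σ → ℝ := fun S => φ (0, Pi.single S 1) with hdS
    have hφ : ∀ (a : ℝ) (ξ : σ → ℝ), φ (a, ξ) = a * c₀ + ∑ S : σ, ξ S * dS S := by
      intro a ξ
      have hdecomp : ((a, ξ) : ℝ × (σ → ℝ))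
          = a • (((1:ℝ), (0 : σ → ℝ)) : ℝ × (σ → ℝ))
            + ∑ S : σ, ξ S • (((0:ℝ), (Pi.single S 1 : σ → ℝ)) : ℝ × (σ → ℝ)) := by
        apply Prod.ext
        · simp [Prod.fst_sum]
        · simp only [Prod.snd_add, Prod.smul_snd, smul_zero, zero_add, Prod.snd_sum]
          funext j
          rw [Finset.sum_apply]
          simp [Pi.single_apply]
          rw [Finset.sum_eq_single j (fun b _ hb => if_neg (Ne.symm hb)) (fun h => absurd (Finset.mem_univ j) h)]
          exact (if_pos rfl).symm
      rw [hdecomp, map_add, map_smul, map_sum]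
      simp_rw [map_smul]
      simp [hc₀, hdS, smul_eq_mul]
    set r : ℝ := ∑ S : σ, |dS S| with hr
    have hr0 : 0 ≤ r := Finset.sum_nonneg fun _ _ => abs_nonneg _
    have hb : (((0:ℝ), fun S : σ => if 0 ≤ dS S then (-1:ℝ) else 1) : ℝ × (σ → ℝ)) ∈ C := by
      refine ⟨rfl, fun S _ => ?_⟩
      by_cases h0 : 0 ≤ dS S <;> simp [h0] <;> norm_num
    have hφb : φ ((0:ℝ), fun S : σ => if 0 ≤ dS S then (-1:ℝ) else 1) = -r := by
      rw [hφ]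
      simp only [zero_mul, zero_add, hr]
      rw [← Finset.sum_neg_distrib]
      refine Finset.sum_congr rfl fun S _ => ?_
      by_cases h0 : 0 ≤ dS S
      · rw [if_pos h0, abs_of_nonneg h0]; ring
      · rw [if_neg h0, abs_of_neg (not_le.mp h0)]; ring
    have hvr : v < -r := hφb ▸ hCv _ hb
    have hTK : ∀ y ∈ Y, φ (T y) < u := by
      intro y hy
      apply hKu
      refine ⟨Pi.single ⟨y, hy⟩ 1, single_mem_stdSimplex ℝ _, ?_⟩
      simp only [hL, LinearMap.coe_mk, AddHom.coe_mk]
      rw [Finset.sum_eq_single (⟨y, hy⟩ : ↥Y)]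
      · simp
      · intro j _ hj; rw [Pi.single_eq_of_ne hj, zero_smul]
      · intro hmem; exact absurd (Finset.mem_univ _) hmem
    set p : (Fin d → ℝ) → ℝ :=
      fun y => -(c₀ + w * ∑ S : σ, dS S * ∏ i ∈ (S : Finset (Fin d)), y i) with hp
    have hfp : ∀ y ∈ Y, r < f y * p y := by
      intro y hy
      have h1 : φ (T y) < -r := lt_trans (hTK y hy) (lt_trans huv hvr)
      rw [hT] at h1
      simp only at h1
      rw [hφ] at h1
      have hswap : ∑ S : σ, (w * (f y * ∏ i ∈ (S : Finset (Fin d)), y i)) * dS S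
          = f y * (w * ∑ S : σ, dS S * ∏ i ∈ (S : Finset (Fin d)), y i) := by
        rw [Finset.mul_sum, Finset.mul_sum]
        exact Finset.sum_congr rfl fun S _ => by ring
      rw [hswap] at h1
      have e2 : f y * p y
          = -(f y * c₀ + f y * (w * ∑ S : σ, dS S * ∏ i ∈ (S : Finset (Fin d)), y i)) := by
        rw [hp]; ring
      rw [e2]
      linarith
    set m : ℝ := Y.inf' hY (fun y => f y * p y) with hm
    have hrm : r < m := (Finset.lt_inf'_iff hY).2 (fun y hy => hfp y hy)
    have hm0 : 0 < m := lt_of_le_of_lt hr0 hrm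
    set c : Finset (Fin d) → ℝ := fun S =>
      if hS : S ≠ ∅ ∧ S.card ≤ t then -(w * dS ⟨S, hS⟩) / m
      else if S = ∅ then -c₀ / m else 0 with hc
    have hczero : ∀ S : Finset (Fin d), ¬(S ≠ ∅ ∧ S.card ≤ t) → S ≠ ∅ → c S = 0 := by
      intro S h1 h2
      rw [hc]
      simp only
      rw [dif_neg h1, if_neg h2]
    have hdeg : polyDegree c ≤ t := by
      apply Finset.sup_le
      intro S hS
      rw [Finset.mem_filter] at hS
      by_cases h1 : S ≠ ∅ ∧ S.card ≤ t
      · exact h1.2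
      · by_cases h2 : S = ∅
        · simp [h2]
        · exact absurd (hczero S h1 h2) hS.2
    have hsubkey : ∀ (A : Finset (Fin d) → ℝ),
        ∑ S ∈ Finset.univ.filter (fun S : Finset (Fin d) => S ≠ ∅ ∧ S.card ≤ t), A S
          = ∑ S : σ, A (S : Finset (Fin d)) := by
      intro A
      rw [← Finset.sum_subtype (Finset.univ.filter (fun S : Finset (Fin d) => S ≠ ∅ ∧ S.card ≤ t))
        (fun S => by simp) A]
    have hcpos : ∀ S : σ, c (S : Finset (Fin d)) = -(w * dS S) / m := by
      intro S
      rw [hc]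
      simp only
      rw [dif_pos S.2]
    have heval : ∀ y, evalPoly c y = p y / m := by
      intro y
      rw [evalPoly,
        ← Finset.sum_filter_add_sum_filter_not Finset.univ
          (fun S : Finset (Fin d) => S ≠ ∅ ∧ S.card ≤ t) (fun S => c S * ∏ i ∈ S, y i)]
      have e1 : ∑ S ∈ Finset.univ.filter (fun S : Finset (Fin d) => S ≠ ∅ ∧ S.card ≤ t),
            c S * ∏ i ∈ S, y i
          = -(w * ∑ S : σ, dS S * ∏ i ∈ (S : Finset (Fin d)), y i) / m := by
        rw [hsubkey (fun S => c S * ∏ i ∈ S, y i)]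
        rw [Finset.mul_sum, neg_div, Finset.sum_div, ← Finset.sum_neg_distrib]
        refine Finset.sum_congr rfl fun S _ => ?_
        rw [hcpos S]
        ring
      have e2 : ∑ S ∈ Finset.univ.filter (fun S : Finset (Fin d) => ¬(S ≠ ∅ ∧ S.card ≤ t)),
            c S * ∏ i ∈ S, y i = -c₀ / m := by
        rw [Finset.sum_eq_single (∅ : Finset (Fin d))]
        · rw [hc]; simp
        · intro S hS hSne
          rw [Finset.mem_filter] at hS
          rw [hczero S hS.2 hSne, zero_mul]
        · intro hne
          exact absurd (by simp : (∅ : Finset (Fin d)) ∈ _) hne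
      rw [e1, e2, hp]
      ring
    have hfeas : ∀ y ∈ Y, 1 ≤ f y * evalPoly c y := by
      intro y hy
      rw [heval y, ← mul_div_assoc, le_div_iff₀ hm0, one_mul]
      exact Finset.inf'_le _ hy
    have hweight : ∑ S ∈ Finset.univ.filter (fun S : Finset (Fin d) => S ≠ ∅), |c S|
        = w * r / m := by
      have hsub : Finset.univ.filter (fun S : Finset (Fin d) => S ≠ ∅ ∧ S.card ≤ t) ⊆
          Finset.univ.filter (fun S : Finset (Fin d) => S ≠ ∅) := by
        intro S hS
        rw [Finset.mem_filter] at *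
        exact ⟨hS.1, hS.2.1⟩
      rw [← Finset.sum_subset hsub]
      · rw [hsubkey (fun S => |c S|), hr, Finset.mul_sum, Finset.sum_div]
        refine Finset.sum_congr rfl fun S _ => ?_
        rw [hcpos S, abs_div, abs_neg, abs_mul, abs_of_pos hw, abs_of_pos hm0]
      · intro S hS1 hS2
        rw [Finset.mem_filter] at hS1
        rw [Finset.mem_filter] at hS2
        rw [hczero S (fun hc2 => hS2 ⟨Finset.mem_univ S, hc2⟩) hS1.2, abs_zero]
    have hfin := h c hdeg hfeas
    rw [hweight] at hfin
    have hlt : w * r / m < w := by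
      rw [div_lt_iff₀ hm0]
      exact mul_lt_mul_of_pos_left hrm hw
    linarith
  · rintro ⟨μ, hμ0, hμ1, hμf, hμS⟩ c hdeg hfeas
    classical
    have hc0 : ∀ S : Finset (Fin d), S ≠ ∅ → t < S.card → c S = 0 := by
      intro S hS hcard
      by_contra hne
      have hmem : S ∈ Finset.univ.filter (fun S => c S ≠ 0) := by
        simp [hne]
      have : S.card ≤ t := le_trans (Finset.le_sup (f := Finset.card) hmem) hdeg
      omega
    have key : ∀ y ∈ Y, μ y ≤ μ y * (f y * evalPoly c y) := fun y hy =>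
      le_mul_of_one_le_right (hμ0 y hy) (hfeas y hy)
    have e1 : ∑ y ∈ Y, μ y * (f y * evalPoly c y)
        = ∑ S : Finset (Fin d), c S * ∑ y ∈ Y, μ y * f y * ∏ i ∈ S, y i := by
      simp_rw [evalPoly, Finset.mul_sum]
      rw [Finset.sum_comm]
      refine Finset.sum_congr rfl fun S _ => ?_
      exact Finset.sum_congr rfl fun y _ => by ring
    calc w = w * ∑ y ∈ Y, μ y := by rw [hμ1, mul_one]
      _ ≤ w * ∑ y ∈ Y, μ y * (f y * evalPoly c y) :=
          mul_le_mul_of_nonneg_left (Finset.sum_le_sum key) hw.le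
      _ = ∑ S : Finset (Fin d), c S * (w * ∑ y ∈ Y, μ y * f y * ∏ i ∈ S, y i) := by
          rw [e1, Finset.mul_sum]; exact Finset.sum_congr rfl fun S _ => by ring
      _ ≤ ∑ S : Finset (Fin d), (if S = ∅ then 0 else |c S|) := by
          apply Finset.sum_le_sum
          intro S _
          by_cases hS : S = ∅
          · subst hS; simp [hμf]
          · simp only [hS, if_false]
            by_cases hcard : S.card ≤ t
            · have h1 : |w * ∑ y ∈ Y, μ y * f y * ∏ i ∈ S, y i| ≤ 1 := by
                rw [abs_mul, abs_of_pos hw]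
                calc w * |∑ y ∈ Y, μ y * f y * ∏ i ∈ S, y i| ≤ w * (1/w) :=
                      mul_le_mul_of_nonneg_left (hμS S hS hcard) hw.le
                  _ = 1 := by field_simp
              calc c S * (w * ∑ y ∈ Y, μ y * f y * ∏ i ∈ S, y i)
                  ≤ |c S * (w * ∑ y ∈ Y, μ y * f y * ∏ i ∈ S, y i)| := le_abs_self _
                _ = |c S| * |w * ∑ y ∈ Y, μ y * f y * ∏ i ∈ S, y i| := abs_mul _ _
                _ ≤ |c S| * 1 := mul_le_mul_of_nonneg_left h1 (abs_nonneg _)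
                _ = |c S| := mul_one _
            · rw [hc0 S hS (by omega)]; simp [abs_nonneg]
      _ = ∑ S ∈ Finset.univ.filter (fun S : Finset (Fin d) => S ≠ ∅), |c S| := by
          rw [Finset.sum_filter]
          exact Finset.sum_congr rfl fun S _ => by by_cases h : S = ∅ <;> simp [h]
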